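/- Let D be a nontrivial 2-(p^d,k,2) design with point set V = GF(p)^d admitting a flag-transitive automorphism group G = T ⋊ G_0 (T the translation group of V, G_0 ≤ GL_d(p) the stabilizer of 0), with even replication number r. Then one of the following holds: (1) T_B = 1 for every block B (T acts semiregularly on blocks) and k divides r; (2) some block has nontrivial stabilizer in T, and then either (a) k = p^t with t > 1 and every block of D is a coset of a t-dimensional GF(p)-subspace of V, or (b) p is odd and k = 2p^t for some t ≥ 1. -/

import Mathlib

section Helpers
variable {V : Type*} [AddCommGroup V] [DecidableEq V]

def trS (B : Finset V) (v : V) : Finset V := B.image (fun x => x + v)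

lemma trS_zero (B : Finset V) : trS B 0 = B := by simp [trS]

lemma trS_trS (B : Finset V) (v w : V) : trS (trS B v) w = trS B (v + w) := by
  simp only [trS, Finset.image_image]
  congr 1
  funext x
  simp [Function.comp, add_assoc]

lemma mem_trS {B : Finset V} {v x : V} : x ∈ trS B v ↔ x - v ∈ B := by
  simp only [trS, Finset.mem_image]
  constructor
  · rintro ⟨y, hy, rfl⟩; simpa using hy
  · intro h; exact ⟨x - v, h, by abel⟩

lemma trS_cancel {B C : Finset V} (v : V) (h : trS B v = trS C v) : B = C :=
  Finset.image_injective (add_left_injective v) h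

lemma trS_eq_trS_iff {B : Finset V} {v w : V} : trS B v = trS B w ↔ trS B (v - w) = B := by
  constructor
  · intro h
    apply trS_cancel w
    rw [trS_trS, sub_add_cancel, h]
  · intro h
    have := congrArg (fun C => trS C w) h
    simpa [trS_trS, sub_add_cancel] using this

lemma trS_neg {B : Finset V} {v : V} (h : trS B v = B) : trS B (-v) = B := by
  apply trS_cancel v
  rw [trS_trS, neg_add_cancel, trS_zero, h]

lemma mem_of_mem_trS_fix {B : Finset V} {v x : V} (hfix : trS B v = B) (hx : x ∈ B) :
    x + v ∈ B := by
  rw [← hfix]; exact Finset.mem_image_of_mem _ hx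

end Helpers

section Count
variable {p d : ℕ} [Fact p.Prime]

abbrev Vec (p d : ℕ) := Fin d → ZMod p

lemma cardV : Fintype.card (Vec p d) = p ^ d := by
  simp [Fintype.card_fun, ZMod.card]

lemma count_bk (k r : ℕ) (𝓑 : Finset (Finset (Vec p d)))
    (hk : ∀ B ∈ 𝓑, B.card = k)
    (hr : ∀ x : Vec p d, (𝓑.filter (fun B => x ∈ B)).card = r) :
    𝓑.card * k = p ^ d * r := by
  classical
  have h1 : ∑ B ∈ 𝓑, B.card = 𝓑.card * k := by
    rw [Finset.sum_congr rfl hk, Finset.sum_const, smul_eq_mul]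
  have h2 : ∀ B : Finset (Vec p d), B.card = ∑ x : Vec p d, if x ∈ B then 1 else 0 := by
    intro B
    rw [← Finset.card_filter]
    congr 1
    ext x
    simp
  calc 𝓑.card * k = ∑ B ∈ 𝓑, B.card := h1.symm
    _ = ∑ B ∈ 𝓑, ∑ x : Vec p d, if x ∈ B then 1 else 0 := Finset.sum_congr rfl (fun B _ => h2 B)
    _ = ∑ x : Vec p d, ∑ B ∈ 𝓑, if x ∈ B then 1 else 0 := Finset.sum_comm
    _ = ∑ x : Vec p d, (𝓑.filter (fun B => x ∈ B)).card := by
        refine Finset.sum_congr rfl (fun x _ => ?_)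
        rw [Finset.card_filter]
    _ = ∑ _x : Vec p d, r := Finset.sum_congr rfl (fun x _ => hr x)
    _ = p ^ d * r := by rw [Finset.sum_const, smul_eq_mul, Finset.card_univ, cardV]

lemma count_dvd (𝓑 : Finset (Finset (Vec p d)))
    (htr : ∀ B ∈ 𝓑, ∀ v : Vec p d, trS B v ∈ 𝓑)
    (hsemi : ∀ B ∈ 𝓑, ∀ v : Vec p d, B.image (fun x => x + v) = B → v = 0) :
    p ^ d ∣ 𝓑.card := by
  classical
  set f : Finset (Vec p d) → Finset (Finset (Vec p d)) :=
    fun B => Finset.univ.image (trS B) with hf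
  have hmemf : ∀ B, B ∈ f B := fun B => Finset.mem_image.2 ⟨0, Finset.mem_univ _, trS_zero B⟩
  have hftr : ∀ (B : Finset (Vec p d)) (v : Vec p d), f (trS B v) = f B := by
    intro B v
    ext C
    simp only [hf, Finset.mem_image]
    constructor
    · rintro ⟨w, -, rfl⟩
      exact ⟨v + w, Finset.mem_univ _, (trS_trS B v w).symm⟩
    · rintro ⟨w, -, rfl⟩
      exact ⟨w - v, Finset.mem_univ _, by rw [trS_trS]; congr 1; abel⟩
  have hfiber : ∀ B ∈ 𝓑, 𝓑.filter (fun C => f C = f B) = f B := by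
    intro B hB
    ext C
    simp only [Finset.mem_filter]
    constructor
    · rintro ⟨hC𝓑, hfC⟩
      exact hfC ▸ hmemf C
    · intro hC
      obtain ⟨v, -, rfl⟩ := Finset.mem_image.1 hC
      exact ⟨htr B hB v, hftr B v⟩
  have hcardf : ∀ B ∈ 𝓑, (f B).card = p ^ d := by
    intro B hB
    rw [hf]
    rw [Finset.card_image_of_injective _ ?_, Finset.card_univ, cardV]
    intro v w hvw
    have h1 : trS B (v - w) = B := trS_eq_trS_iff.1 hvw
    have h2 := hsemi B hB _ h1
    have : v - w = 0 := h2
    have := sub_eq_zero.1 this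
    exact this
  rw [Finset.card_eq_sum_card_fiberwise (f := f) (t := 𝓑.image f)
    (fun C hC => Finset.mem_image_of_mem f hC)]
  have : ∀ c ∈ 𝓑.image f, (𝓑.filter (fun C => f C = c)).card = p ^ d := by
    intro c hc
    obtain ⟨B, hB, rfl⟩ := Finset.mem_image.1 hc
    rw [hfiber B hB, hcardf B hB]
  rw [Finset.sum_congr rfl this, Finset.sum_const, smul_eq_mul]
  exact Dvd.intro_left _ rfl
end Count

/-- Let `D` be a nontrivial 2-(p^d,k,2) design with point set `V = GF(p)^d`
admitting a flag-transitive automorphism group `G = T ⋊ G₀` with even replication number `r`.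
Then either `T` acts semiregularly on blocks and `k ∣ r`, or some block has nontrivial
translation stabilizer and either `k = p^t` (`t > 1`) with every block a coset of a
`t`-dimensional subspace, or `p` is odd and `k = 2·p^t` with `t ≥ 1`. -/
theorem stmt_3 (p d k r : ℕ) [Fact p.Prime]
    (𝓑 : Finset (Finset (Fin d → ZMod p)))
    (G₀ : Subgroup ((Fin d → ZMod p) ≃ₗ[ZMod p] (Fin d → ZMod p)))
    (hk : ∀ B ∈ 𝓑, B.card = k)
    (hlam : ∀ x y : Fin d → ZMod p, x ≠ y →
      (𝓑.filter (fun B => x ∈ B ∧ y ∈ B)).card = 2)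
    (hr : ∀ x : Fin d → ZMod p, (𝓑.filter (fun B => x ∈ B)).card = r)
    (hk2 : 2 < k) (hkv : k < p ^ d)
    (hinv : ∀ B ∈ 𝓑, ∀ g ∈ G₀, ∀ v : Fin d → ZMod p,
      B.image (fun x => g x + v) ∈ 𝓑)
    (hflag : ∀ B ∈ 𝓑, ∀ C ∈ 𝓑, ∀ x ∈ B, ∀ y ∈ C,
      ∃ g ∈ G₀, ∃ v : Fin d → ZMod p,
        B.image (fun z => g z + v) = C ∧ g x + v = y)
    (hreven : Even r) :
    ((∀ B ∈ 𝓑, ∀ v : Fin d → ZMod p, B.image (fun x => x + v) = B → v = 0) ∧ k ∣ r) ∨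
    ((∃ B ∈ 𝓑, ∃ v : Fin d → ZMod p, v ≠ 0 ∧ B.image (fun x => x + v) = B) ∧
      ((∃ t : ℕ, 1 < t ∧ k = p ^ t ∧
          ∀ B ∈ 𝓑, ∃ (W : Submodule (ZMod p) (Fin d → ZMod p)) (u : Fin d → ZMod p),
            Module.finrank (ZMod p) W = t ∧
            (↑B : Set (Fin d → ZMod p)) = (fun x => x + u) '' (W : Set (Fin d → ZMod p))) ∨
        (Odd p ∧ ∃ t : ℕ, 1 ≤ t ∧ k = 2 * p ^ t))) := by
  classical
  have htr : ∀ B ∈ 𝓑, ∀ v : Fin d → ZMod p, trS B v ∈ 𝓑 := by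
    intro B hB v
    have := hinv B hB 1 G₀.one_mem v
    simpa [trS] using this
  by_cases hsemi : ∀ B ∈ 𝓑, ∀ v : Fin d → ZMod p, B.image (fun x => x + v) = B → v = 0
  · left
    refine ⟨hsemi, ?_⟩
    have hbk := count_bk k r 𝓑 hk hr
    obtain ⟨m, hm⟩ := count_dvd 𝓑 htr hsemi
    have hpd : 0 < p ^ d := pow_pos (Fact.out : p.Prime).pos d
    have : p ^ d * (m * k) = p ^ d * r := by
      rw [← hbk, hm]; ring
    have hr' : m * k = r := Nat.eq_of_mul_eq_mul_left hpd this
    exact ⟨m, by rw [← hr', Nat.mul_comm]⟩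
  · right
    push_neg at hsemi
    obtain ⟨B₀, hB₀, v₀, hfix₀', hv₀⟩ := hsemi
    have hfix₀ : trS B₀ v₀ = B₀ := hfix₀'
    refine ⟨⟨B₀, hB₀, v₀, hv₀, hfix₀'⟩, ?_⟩
    -- Normalize so that 0 ∈ B
    have hkpos : 0 < k := by omega
    obtain ⟨x₀, hx₀⟩ : B₀.Nonempty := Finset.card_pos.1 (by rw [hk B₀ hB₀]; exact hkpos)
    set B : Finset (Fin d → ZMod p) := trS B₀ (-x₀) with hBdef
    have hB : B ∈ 𝓑 := htr B₀ hB₀ _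
    have h0B : (0 : Fin d → ZMod p) ∈ B := mem_trS.2 (by simpa using hx₀)
    have hfixB : trS B v₀ = B := by
      rw [hBdef, trS_trS, add_comm, ← trS_trS, hfix₀]
    have hcardB : B.card = k := by
      rw [hBdef, trS, Finset.card_image_of_injective _ (add_left_injective _), hk B₀ hB₀]
    -- the translation stabilizer of B
    set Hf : Finset (Fin d → ZMod p) := Finset.univ.filter (fun v => trS B v = B) with hHfdef
    have hmemHf : ∀ v : Fin d → ZMod p, v ∈ Hf ↔ trS B v = B := by
      intro v; simp [hHfdef]
    have hv₀Hf : v₀ ∈ Hf := (hmemHf v₀).2 hfixB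
    have h0Hf : (0 : Fin d → ZMod p) ∈ Hf := (hmemHf 0).2 (trS_zero B)
    have hHfB : Hf ⊆ B := by
      intro h hh
      have := mem_of_mem_trS_fix ((hmemHf h).1 hh) h0B
      simpa using this
    have hnegHf : ∀ v ∈ Hf, -v ∈ Hf := fun v hv => (hmemHf _).2 (trS_neg ((hmemHf v).1 hv))
    have haddHf : ∀ v ∈ Hf, ∀ u ∈ B, u + v ∈ B :=
      fun v hv u hu => mem_of_mem_trS_fix ((hmemHf v).1 hv) hu
    -- the stabilizer as a submodule
    set Wadd : AddSubgroup (Fin d → ZMod p) :=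
      { carrier := {v | trS B v = B}
        zero_mem' := trS_zero B
        add_mem' := by
          intro a b ha hb
          show trS B (a + b) = B
          rw [← trS_trS, ha, hb]
        neg_mem' := by
          intro a ha
          exact trS_neg ha } with hWadddef
    set W : Submodule (ZMod p) (Fin d → ZMod p) := AddSubgroup.toZModSubmodule p Wadd with hWdef
    have hmemW : ∀ v : Fin d → ZMod p, v ∈ W ↔ trS B v = B := fun v => Iff.rfl
    have hmemWHf : ∀ v : Fin d → ZMod p, v ∈ W ↔ v ∈ Hf := by
      intro v; rw [hmemW, hmemHf]
    obtain ⟨t, ht⟩ : ∃ t, t = Module.finrank (ZMod p) W := ⟨_, rfl⟩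
    have hcardW : Hf.card = p ^ t := by
      have e1 : Fintype.card W = Hf.card := by
        calc Fintype.card W = Fintype.card {x // x ∈ Hf} :=
              Fintype.card_congr (Equiv.subtypeEquivRight hmemWHf)
          _ = Hf.card := Fintype.card_coe Hf
      rw [← e1, Module.card_eq_pow_finrank (K := ZMod p), ZMod.card, ht]
    -- the set of translates of B through 0 and v₀
    set S : Finset (Finset (Fin d → ZMod p)) := B.image (fun u => trS B (-u)) with hSdef
    have hBS : B ∈ S := Finset.mem_image.2 ⟨0, h0B, by rw [neg_zero, trS_zero]⟩
    have hSsub : S ⊆ 𝓑.filter (fun C => 0 ∈ C ∧ v₀ ∈ C) := by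
      intro C hC
      obtain ⟨u, hu, rfl⟩ := Finset.mem_image.1 hC
      refine Finset.mem_filter.2 ⟨htr B hB _, mem_trS.2 ?_, mem_trS.2 ?_⟩
      · simpa using hu
      · have h1 := haddHf v₀ hv₀Hf u hu
        have h2 : v₀ - -u = u + v₀ := by abel
        rw [h2]; exact h1
    have hScard2 : S.card ≤ 2 := by
      have h2 := hlam 0 v₀ (Ne.symm hv₀)
      calc S.card ≤ (𝓑.filter (fun C => 0 ∈ C ∧ v₀ ∈ C)).card := Finset.card_le_card hSsub
        _ = 2 := h2
    have hfibcard : ∀ C ∈ S, (B.filter (fun u => trS B (-u) = C)).card = Hf.card := by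
      intro C hC
      obtain ⟨u₀, hu₀, rfl⟩ := Finset.mem_image.1 hC
      have hfib : B.filter (fun u => trS B (-u) = trS B (-u₀)) = Hf.image (fun h => h + u₀) := by
        ext x
        simp only [Finset.mem_filter, Finset.mem_image]
        constructor
        · rintro ⟨hxB, hx⟩
          have h1 : trS B (-x - -u₀) = B := trS_eq_trS_iff.1 hx
          have h2 : u₀ - x ∈ Hf := (hmemHf _).2 (by rw [← h1]; congr 1; abel)
          refine ⟨x - u₀, ?_, by abel⟩
          have := hnegHf _ h2
          simpa [neg_sub] using this
        · rintro ⟨h, hh, rfl⟩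
          refine ⟨by rw [add_comm]; exact haddHf h hh u₀ hu₀, ?_⟩
          rw [trS_eq_trS_iff]
          have e : -(h + u₀) - -u₀ = -h := by abel
          rw [e]
          exact (hmemHf _).1 (hnegHf h hh)
      rw [hfib, Finset.card_image_of_injective _ (add_left_injective u₀)]
    have hkSq : k = S.card * Hf.card := by
      rw [← hcardB,
        Finset.card_eq_sum_card_fiberwise (f := fun u => trS B (-u)) (t := S)
          (fun u hu => Finset.mem_image_of_mem _ hu),
        Finset.sum_congr rfl hfibcard, Finset.sum_const, smul_eq_mul]
    have hSpos : 1 ≤ S.card := Finset.card_pos.2 ⟨B, hBS⟩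
    have hScase : S.card = 1 ∨ S.card = 2 := by omega
    rcases hScase with h1 | h2
    · -- single coset case
      have hBHf : B = Hf := by
        apply Finset.Subset.antisymm _ hHfB
        intro u hu
        have hmem : trS B (-u) ∈ S := Finset.mem_image_of_mem _ hu
        have heq : trS B (-u) = B :=
          Finset.card_le_one.1 (le_of_eq h1) _ hmem _ hBS
        have : -u ∈ Hf := (hmemHf _).2 heq
        have := hnegHf _ this
        simpa using this
      have hkpt : k = p ^ t := by rw [hkSq, h1, one_mul, hcardW]
      have hBW : ∀ x : Fin d → ZMod p, x ∈ B ↔ x ∈ W := by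
        intro x; rw [hBHf, hmemWHf]
      have htgt : 1 < t := by
        by_contra hcon
        have hle : t = 0 ∨ t = 1 := by omega
        rcases hle with ht0 | ht1
        · rw [ht0, pow_zero] at hkpt; omega
        · -- t = 1 : blocks would be lines, contradicting λ = 2
          have hv₀W : v₀ ∈ W := (hmemWHf v₀).2 hv₀Hf
          have hWspan : W = Submodule.span (ZMod p) {v₀} := by
            symm
            apply Submodule.eq_of_le_of_finrank_eq
            · exact Submodule.span_le.2 (by simp [hv₀W])
            · rw [finrank_span_singleton hv₀, ← ht, ht1]
          have hv₀B : v₀ ∈ B := hHfB hv₀Hf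
          have hBfil : B ∈ 𝓑.filter (fun C => 0 ∈ C ∧ v₀ ∈ C) :=
            Finset.mem_filter.2 ⟨hB, h0B, hv₀B⟩
          have hcard2 := hlam 0 v₀ (Ne.symm hv₀)
          obtain ⟨C, hCfil, hCne⟩ :
              ∃ C ∈ 𝓑.filter (fun C => 0 ∈ C ∧ v₀ ∈ C), C ≠ B := by
            have he : ((𝓑.filter (fun C => 0 ∈ C ∧ v₀ ∈ C)).erase B).card = 1 := by
              rw [Finset.card_erase_of_mem hBfil, hcard2]
            obtain ⟨C, hC⟩ := Finset.card_pos.1 (by rw [he]; norm_num)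
            exact ⟨C, Finset.mem_of_mem_erase hC, Finset.ne_of_mem_erase hC⟩
          obtain ⟨hC𝓑, h0C, hv₀C⟩ := Finset.mem_filter.1 hCfil
          obtain ⟨g, hg, u, hgu, hgfix⟩ := hflag B hB C hC𝓑 0 h0B 0 h0C
          have hu0 : u = 0 := by simpa using hgfix
          rw [hu0] at hgu
          simp only [add_zero] at hgu
          -- C is the image of B under g
          have hgv₀ne : (g : (Fin d → ZMod p) ≃ₗ[ZMod p] (Fin d → ZMod p)) v₀ ≠ 0 := by
            intro hzero
            exact hv₀ ((g : (Fin d → ZMod p) ≃ₗ[ZMod p] (Fin d → ZMod p)).map_eq_zero_iff.1 hzero)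
          have hmapW : W.map ((g : (Fin d → ZMod p) ≃ₗ[ZMod p] (Fin d → ZMod p)) :
              (Fin d → ZMod p) →ₗ[ZMod p] (Fin d → ZMod p)) = W := by
            rw [hWspan, Submodule.map_span, Set.image_singleton]
            simp only [LinearEquiv.coe_coe]
            have hv₀mem : v₀ ∈ Submodule.span (ZMod p) {(g v₀ : Fin d → ZMod p)} := by
              rw [← hgu] at hv₀C
              obtain ⟨h, hhB, hgh⟩ := Finset.mem_image.1 hv₀C
              have hhW : h ∈ W := (hBW h).1 hhB
              rw [hWspan] at hhW
              obtain ⟨c, hc⟩ := Submodule.mem_span_singleton.1 hhW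
              rw [Submodule.mem_span_singleton]
              exact ⟨c, by rw [← map_smul, hc, hgh]⟩
            symm
            apply Submodule.eq_of_le_of_finrank_eq
            · exact Submodule.span_le.2 (by simp [hv₀mem])
            · rw [finrank_span_singleton hv₀, finrank_span_singleton hgv₀ne]
          have hCB : C = B := by
            ext x
            rw [← hgu]
            simp only [Finset.mem_image]
            constructor
            · rintro ⟨h, hhB, rfl⟩
              have : (g : (Fin d → ZMod p) ≃ₗ[ZMod p] (Fin d → ZMod p)) h ∈
                  W.map ((g : (Fin d → ZMod p) ≃ₗ[ZMod p] (Fin d → ZMod p)) :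
                    (Fin d → ZMod p) →ₗ[ZMod p] (Fin d → ZMod p)) :=
                ⟨h, (hBW h).1 hhB, rfl⟩
              rw [hmapW] at this
              exact (hBW _).2 this
            · intro hxB
              have hxW : x ∈ W := (hBW x).1 hxB
              rw [← hmapW] at hxW
              obtain ⟨h, hhW, rfl⟩ := hxW
              exact ⟨h, (hBW h).2 hhW, rfl⟩
          exact hCne hCB
      refine Or.inl ⟨t, htgt, hkpt, ?_⟩
      intro C hC𝓑
      obtain ⟨y, hy⟩ : C.Nonempty := Finset.card_pos.1 (by rw [hk C hC𝓑]; exact hkpos)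
      obtain ⟨g, hg, u, hgu, -⟩ := hflag B hB C hC𝓑 0 h0B y hy
      refine ⟨W.map ((g : (Fin d → ZMod p) ≃ₗ[ZMod p] (Fin d → ZMod p)) :
          (Fin d → ZMod p) →ₗ[ZMod p] (Fin d → ZMod p)), u, ?_, ?_⟩
      · rw [LinearEquiv.finrank_map_eq, ht]
      · rw [← hgu, Finset.coe_image]
        have hBWset : (B : Set (Fin d → ZMod p)) = (W : Set (Fin d → ZMod p)) := by
          ext x; simpa using hBW x
        rw [hBWset, Submodule.map_coe, Set.image_image]
        simp only [LinearEquiv.coe_coe]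
    · -- two cosets case
      have hp2 : p ≠ 2 := by
        intro hp2
        obtain ⟨a, haB, hane⟩ : ∃ a ∈ B, trS B (-a) ≠ B := by
          by_contra hcon
          push_neg at hcon
          have hsub : S ⊆ {B} := by
            intro C hC
            obtain ⟨u, hu, rfl⟩ := Finset.mem_image.1 hC
            simp [hcon u hu]
          have := Finset.card_le_card hsub
          simp at this
          omega
        have haHf : a ∉ Hf := by
          intro h
          exact hane ((hmemHf _).1 (hnegHf a h))
        have hSeq : S = {B, trS B (-a)} := by
          symm
          apply Finset.eq_of_subset_of_card_le
          · intro C hC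
            rcases Finset.mem_insert.1 hC with rfl | hC
            · exact hBS
            · rw [Finset.mem_singleton.1 hC]
              exact Finset.mem_image_of_mem _ haB
          · rw [h2, Finset.card_pair (Ne.symm hane)]
        have hdec : ∀ x ∈ B, x ∈ Hf ∨ x - a ∈ Hf := by
          intro x hx
          have hmem : trS B (-x) ∈ S := Finset.mem_image_of_mem _ hx
          rw [hSeq] at hmem
          rcases Finset.mem_insert.1 hmem with h | h
          · left
            have : -x ∈ Hf := (hmemHf _).2 h
            have := hnegHf _ this
            simpa using this
          · right
            have h' := Finset.mem_singleton.1 h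
            have h1 : trS B (-x - -a) = B := trS_eq_trS_iff.1 h'
            have h2' : a - x ∈ Hf := (hmemHf _).2 (by rw [← h1]; congr 1; abel)
            have := hnegHf _ h2'
            simpa [neg_sub] using this
        subst hp2
        have haa : a + a = 0 := by
          funext i
          exact CharTwo.add_self_eq_zero (a i)
        have hfixa : trS B a = B := by
          apply Finset.eq_of_subset_of_card_le
          · intro x hx
            obtain ⟨y, hy, rfl⟩ := Finset.mem_image.1 hx
            rcases hdec y hy with h | h
            · have := haddHf y h a haB
              rwa [add_comm] at this
            · have hyx : y + a = y - a := by
                calc y + a = y - a + (a + a) := by abel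
                  _ = y - a := by rw [haa, add_zero]
              rw [hyx]
              exact hHfB h
          · rw [trS, Finset.card_image_of_injective _ (add_left_injective a)]
        exact haHf ((hmemHf a).2 hfixa)
      have hodd : Odd p := (Fact.out : p.Prime).odd_of_ne_two hp2
      have ht1 : 1 ≤ t := by
        by_contra hcon
        have ht0 : t = 0 := by omega
        rw [hkSq, h2, hcardW, ht0, pow_zero, mul_one] at hk2
        omega
      exact Or.inr ⟨hodd, t, ht1, by rw [hkSq, h2, hcardW]⟩
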